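/- For probability distributions P, Q on a finite set with P ≪ Q, the first-order Taylor expansion of the Rényi divergence around s = 1 is D_{1+s}(P‖Q) = D(P‖Q) + (s/2)·V(P‖Q) + O(s²) as s → 0, where D is the Kullback–Leibler divergence and V(P‖Q) = Σ_x P(x)(log P(x) − log Q(x) − D(P‖Q))² is the variance of the log-likelihood ratio. -/

import Mathlib

open Finset

/-- g_s(P‖Q) = Σ_{x : P(x)>0} P(x)^s Q(x)^{1−s}. -/
noncomputable def gRenyi {𝒳 : Type*} [Fintype 𝒳] (s : ℝ) (P Q : 𝒳 → ℝ) : ℝ :=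
  ∑ x ∈ univ.filter (fun x => 0 < P x), P x ^ s * Q x ^ (1 - s)

/-- Rényi divergence of order s ≠ 1. -/
noncomputable def DRenyi {𝒳 : Type*} [Fintype 𝒳] (s : ℝ) (P Q : 𝒳 → ℝ) : ℝ :=
  (s - 1)⁻¹ * Real.log (gRenyi s P Q)

/-- Kullback–Leibler divergence. -/
noncomputable def DKL {𝒳 : Type*} [Fintype 𝒳] (P Q : 𝒳 → ℝ) : ℝ :=
  ∑ x ∈ univ.filter (fun x => 0 < P x), P x * (Real.log (P x) - Real.log (Q x))

/-- Variance of the log-likelihood ratio. -/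
noncomputable def VLLR {𝒳 : Type*} [Fintype 𝒳] (P Q : 𝒳 → ℝ) : ℝ :=
  ∑ x ∈ univ.filter (fun x => 0 < P x),
    P x * (Real.log (P x) - Real.log (Q x) - DKL P Q) ^ 2

lemma exp_taylor3 {y : ℝ} (hy : |y| ≤ 1) :
    |Real.exp y - (1 + y + y ^ 2 / 2)| ≤ |y| ^ 3 := by
  have h := Real.exp_bound hy (n := 3) (by norm_num)
  have hsum : ∑ m ∈ range 3, y ^ m / (m.factorial : ℝ) = 1 + y + y ^ 2 / 2 := by
    norm_num [Finset.sum_range_succ, Nat.factorial]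
  rw [hsum] at h
  have h3 : (0:ℝ) ≤ |y| ^ 3 := by positivity
  calc |Real.exp y - (1 + y + y ^ 2 / 2)| ≤ |y| ^ 3 * ((3+1 : ℕ) * ((3:ℕ).factorial * (3:ℕ) : ℝ)⁻¹) := h
    _ ≤ |y| ^ 3 := by
        norm_num [Nat.factorial]
        nlinarith

lemma log_taylor2 {u : ℝ} (hu : |u| ≤ 1/2) :
    |Real.log (1 + u) - (u - u ^ 2 / 2)| ≤ 2 * |u| ^ 3 := by
  have h : |(-u : ℝ)| < 1 := by rw [abs_neg]; linarith [abs_nonneg u]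
  have h2 := Real.abs_log_sub_add_sum_range_le h 2
  have hsum : ∑ i ∈ range 2, (-u) ^ (i + 1) / ((i:ℝ) + 1) = -u + u ^ 2 / 2 := by
    simp [Finset.sum_range_succ]
    ring
  rw [hsum, abs_neg] at h2
  have e1 : (1 : ℝ) - -u = 1 + u := by ring
  rw [e1] at h2
  have e2 : |(-u + u ^ 2 / 2) + Real.log (1+u)| = |Real.log (1 + u) - (u - u ^ 2 / 2)| := by
    congr 1; ring
  rw [e2] at h2
  have hd : (1:ℝ)/2 ≤ 1 - |u| := by linarith
  have := h2.trans (div_le_div_of_nonneg_left ?_ ?_ hd)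
  · calc |Real.log (1 + u) - (u - u ^ 2 / 2)| ≤ |u| ^ (2+1) / (1/2) := this
      _ = 2 * |u| ^ 3 := by ring
  · positivity
  · norm_num

set_option maxHeartbeats 1000000 in
/-- First-order Taylor expansion of the Rényi divergence around s = 1:
D_{1+s}(P‖Q) = D(P‖Q) + (s/2)·V(P‖Q) + O(s²) as s → 0. -/
theorem DRenyi_taylor_at_one {𝒳 : Type*} [Fintype 𝒳]
    (P Q : 𝒳 → ℝ)
    (hP0 : ∀ x, 0 ≤ P x) (hP1 : ∑ x, P x = 1)
    (hQ0 : ∀ x, 0 ≤ Q x) (hQ1 : ∑ x, Q x = 1)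
    (hac : ∀ x, Q x = 0 → P x = 0) :
    (fun s : ℝ => DRenyi (1 + s) P Q - (DKL P Q + s / 2 * VLLR P Q))
      =O[nhdsWithin 0 {0}ᶜ] (fun s : ℝ => s ^ 2) := by
  set S : Finset 𝒳 := univ.filter (fun x => 0 < P x) with hS
  set L : 𝒳 → ℝ := fun x => Real.log (P x) - Real.log (Q x) with hL
  set D : ℝ := DKL P Q with hD
  set V : ℝ := VLLR P Q with hV
  have hpos : ∀ x ∈ S, 0 < P x := fun x hx => (mem_filter.mp hx).2
  have hQpos : ∀ x ∈ S, 0 < Q x := by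
    intro x hx
    rcases (hQ0 x).lt_or_eq with h | h
    · exact h
    · exact absurd (hac x h.symm) (hpos x hx).ne'
  have sumP : ∑ x ∈ S, P x = 1 := by
    rw [hS, Finset.sum_filter_of_ne, hP1]
    intro x _ h
    exact (hP0 x).lt_of_ne (Ne.symm h)
  have sumPL : ∑ x ∈ S, P x * L x = D := by
    simp only [hD, DKL, hS, hL]
  have hV0 : 0 ≤ V := by
    rw [hV, VLLR]
    exact Finset.sum_nonneg fun x hx => mul_nonneg (hP0 x) (sq_nonneg _)
  have sumPL2 : ∑ x ∈ S, P x * L x ^ 2 = V + D ^ 2 := by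
    have hVe : V = ∑ x ∈ S, P x * (L x - D) ^ 2 := by
      simp only [hV, VLLR, hS, hL, ← hD]
    have expand : ∑ x ∈ S, P x * (L x - D) ^ 2
        = (∑ x ∈ S, P x * L x ^ 2) - 2 * D * (∑ x ∈ S, P x * L x)
          + D ^ 2 * (∑ x ∈ S, P x) := by
      rw [Finset.mul_sum, Finset.mul_sum, ← Finset.sum_sub_distrib, ← Finset.sum_add_distrib]
      exact Finset.sum_congr rfl fun x _ => by ring
    rw [sumP, sumPL] at expand
    rw [hVe, expand]; ring
  set f : ℝ → ℝ := fun s => ∑ x ∈ S, P x * Real.exp (s * L x) with hf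
  have gEq : ∀ s : ℝ, gRenyi (1 + s) P Q = f s := by
    intro s
    simp only [gRenyi, hf, ← hS]
    refine Finset.sum_congr rfl fun x hx => ?_
    rw [Real.rpow_def_of_pos (hpos x hx), Real.rpow_def_of_pos (hQpos x hx), ← Real.exp_add]
    conv_rhs => rw [← Real.exp_log (hpos x hx), ← Real.exp_add]
    congr 1
    simp only [hL]
    ring
  obtain ⟨C1, hC1def⟩ : ∃ c : ℝ, c = ∑ x ∈ S, P x * |L x| ^ 3 := ⟨_, rfl⟩
  have hC1 : 0 ≤ C1 := by
    rw [hC1def]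
    exact Finset.sum_nonneg fun x hx => mul_nonneg (hP0 x) (pow_nonneg (abs_nonneg _) 3)
  obtain ⟨B, hBdef⟩ : ∃ b : ℝ, b = 1 + ∑ x ∈ S, |L x| := ⟨_, rfl⟩
  have hB1 : 1 ≤ B := by
    rw [hBdef]
    have : 0 ≤ ∑ x ∈ S, |L x| := Finset.sum_nonneg fun x _ => abs_nonneg _
    linarith
  have hB0 : 0 < B := by linarith
  have hLB : ∀ x ∈ S, |L x| ≤ B := by
    intro x hx
    rw [hBdef]
    have := Finset.single_le_sum (f := fun x => |L x|) (fun y _ => abs_nonneg _) hx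
    linarith
  obtain ⟨E, hEdef⟩ : ∃ e : ℝ, e = |D| + (V + D ^ 2) / 2 + C1 := ⟨_, rfl⟩
  have hE0 : 0 ≤ E := by
    rw [hEdef]
    have h1 := abs_nonneg D
    have h2 := sq_nonneg D
    linarith
  obtain ⟨δ, hδdef⟩ : ∃ d : ℝ, d = min (1 / B) (1 / (2 * E + 1)) := ⟨_, rfl⟩
  have hδ0 : 0 < δ := by
    rw [hδdef]
    exact lt_min (by positivity) (by positivity)
  obtain ⟨K, hKdef⟩ : ∃ k : ℝ, k = C1 + 2 * E ^ 3 + E ^ 2 := ⟨_, rfl⟩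
  have key : ∀ s : ℝ, |s| ≤ δ →
      |Real.log (f s) - (D * s + V / 2 * s ^ 2)| ≤ K * |s| ^ 3 := by
    intro s hs
    have hsB : |s| ≤ 1 / B := hs.trans (le_of_eq_of_le hδdef (min_le_left _ _))
    have hsE : |s| ≤ 1 / (2 * E + 1) := hs.trans (le_of_eq_of_le hδdef (min_le_right _ _))
    have hs1 : |s| ≤ 1 := hsB.trans (by rw [div_le_one hB0]; exact hB1)
    have hs0 : 0 ≤ |s| := abs_nonneg s
    -- Step A
    have sumTaylor : ∑ x ∈ S, P x * (1 + s * L x + (s * L x) ^ 2 / 2)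
        = 1 + D * s + (V + D ^ 2) / 2 * s ^ 2 := by
      have : ∑ x ∈ S, P x * (1 + s * L x + (s * L x) ^ 2 / 2)
          = (∑ x ∈ S, P x) + s * (∑ x ∈ S, P x * L x)
            + s ^ 2 / 2 * (∑ x ∈ S, P x * L x ^ 2) := by
        rw [Finset.mul_sum, Finset.mul_sum, ← Finset.sum_add_distrib, ← Finset.sum_add_distrib]
        exact Finset.sum_congr rfl fun x _ => by ring
      rw [this, sumP, sumPL, sumPL2]; ring
    have stepA : |f s - (1 + D * s + (V + D ^ 2) / 2 * s ^ 2)| ≤ C1 * |s| ^ 3 := by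
      rw [← sumTaylor]
      simp only [hf]
      rw [← Finset.sum_sub_distrib]
      calc |∑ x ∈ S, (P x * Real.exp (s * L x) - P x * (1 + s * L x + (s * L x) ^ 2 / 2))|
          ≤ ∑ x ∈ S, |P x * Real.exp (s * L x) - P x * (1 + s * L x + (s * L x) ^ 2 / 2)| :=
            Finset.abs_sum_le_sum_abs _ _
        _ ≤ ∑ x ∈ S, P x * |L x| ^ 3 * |s| ^ 3 := by
            refine Finset.sum_le_sum fun x hx => ?_
            have hsl : |s * L x| ≤ 1 := by
              rw [abs_mul]
              calc |s| * |L x| ≤ (1 / B) * B :=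
                mul_le_mul hsB (hLB x hx) (abs_nonneg _) (by positivity)
                _ = 1 := by field_simp
            have h1 : P x * Real.exp (s * L x) - P x * (1 + s * L x + (s * L x) ^ 2 / 2)
                = P x * (Real.exp (s * L x) - (1 + s * L x + (s * L x) ^ 2 / 2)) := by ring
            rw [h1, abs_mul, abs_of_nonneg (hpos x hx).le]
            have := exp_taylor3 hsl
            calc P x * |Real.exp (s * L x) - (1 + s * L x + (s * L x) ^ 2 / 2)|
                ≤ P x * |s * L x| ^ 3 :=
                  mul_le_mul_of_nonneg_left this (hpos x hx).le
              _ = P x * |L x| ^ 3 * |s| ^ 3 := by rw [abs_mul, mul_pow]; ring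
        _ = C1 * |s| ^ 3 := by rw [hC1def, Finset.sum_mul]
    obtain ⟨u, hu⟩ : ∃ u : ℝ, u = f s - 1 := ⟨_, rfl⟩
    have hfs : f s = 1 + u := by rw [hu]; ring
    have habs2 : s ^ 2 = |s| ^ 2 := (sq_abs s).symm
    have habs3 : |s| ^ 3 ≤ |s| ^ 2 := by
      calc |s| ^ 3 = |s| ^ 2 * |s| := by ring
        _ ≤ |s| ^ 2 * 1 := mul_le_mul_of_nonneg_left hs1 (by positivity)
        _ = |s| ^ 2 := by ring
    have habs21 : |s| ^ 2 ≤ |s| := by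
      calc |s| ^ 2 = |s| * |s| := by ring
        _ ≤ 1 * |s| := mul_le_mul_of_nonneg_right hs1 hs0
        _ = |s| := one_mul _
    have hA' : |u - (D * s + (V + D ^ 2) / 2 * s ^ 2)| ≤ C1 * |s| ^ 3 := by
      have : u - (D * s + (V + D ^ 2) / 2 * s ^ 2)
          = f s - (1 + D * s + (V + D ^ 2) / 2 * s ^ 2) := by rw [hu]; ring
      rw [this]; exact stepA
    have hDd : (0:ℝ) ≤ (V + D ^ 2) / 2 := by
      have := sq_nonneg D; linarith
    have huE : |u| ≤ E * |s| := by
      have h1 : |u| ≤ |u - (D * s + (V + D ^ 2) / 2 * s ^ 2)| + |D * s| + |(V + D ^ 2) / 2 * s ^ 2| := by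
        have t1 : |u| ≤ |u - (D * s + (V + D ^ 2) / 2 * s ^ 2)| + |D * s + (V + D ^ 2) / 2 * s ^ 2| := by
          have := abs_add_le (u - (D * s + (V + D ^ 2) / 2 * s ^ 2)) (D * s + (V + D ^ 2) / 2 * s ^ 2)
          rw [sub_add_cancel] at this
          exact this
        have t2 : |D * s + (V + D ^ 2) / 2 * s ^ 2| ≤ |D * s| + |(V + D ^ 2) / 2 * s ^ 2| :=
          abs_add_le _ _
        linarith
      have h2 : |D * s| = |D| * |s| := abs_mul _ _
      have h3 : |(V + D ^ 2) / 2 * s ^ 2| = (V + D ^ 2) / 2 * |s| ^ 2 := by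
        rw [abs_mul, abs_of_nonneg hDd, habs2, abs_pow, abs_abs]
      have hs3le : |s| ^ 3 ≤ |s| := habs3.trans habs21
      have hC1s : C1 * |s| ^ 3 ≤ C1 * |s| := mul_le_mul_of_nonneg_left hs3le hC1
      have hVs : (V + D ^ 2) / 2 * |s| ^ 2 ≤ (V + D ^ 2) / 2 * |s| :=
        mul_le_mul_of_nonneg_left habs21 hDd
      have eE : E * |s| = |D| * |s| + (V + D ^ 2) / 2 * |s| + C1 * |s| := by
        rw [hEdef]; ring
      linarith [hA']
    have hu12 : |u| ≤ 1 / 2 := by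
      have h2E : (0:ℝ) < 2 * E + 1 := by linarith
      have : E * |s| ≤ E * (1 / (2 * E + 1)) := mul_le_mul_of_nonneg_left hsE hE0
      have hE2 : E * (1 / (2 * E + 1)) ≤ 1 / 2 := by
        have e : E * (1 / (2 * E + 1)) = E / (2 * E + 1) := by ring
        rw [e, div_le_iff₀ h2E]
        linarith
      linarith
    have hlog := log_taylor2 hu12
    have hu3 : |u| ^ 3 ≤ E ^ 3 * |s| ^ 3 := by
      calc |u| ^ 3 ≤ (E * |s|) ^ 3 := by
            exact pow_le_pow_left₀ (abs_nonneg u) huE 3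
        _ = E ^ 3 * |s| ^ 3 := by ring
    -- quadratic term
    have hsub : |u - D * s| ≤ ((V + D ^ 2) / 2 + C1) * |s| ^ 2 := by
      have e : u - D * s = (u - (D * s + (V + D ^ 2) / 2 * s ^ 2)) + (V + D ^ 2) / 2 * s ^ 2 := by
        ring
      rw [e]
      have := abs_add_le (u - (D * s + (V + D ^ 2) / 2 * s ^ 2)) ((V + D ^ 2) / 2 * s ^ 2)
      have h3 : |(V + D ^ 2) / 2 * s ^ 2| = (V + D ^ 2) / 2 * |s| ^ 2 := by
        rw [abs_mul, abs_of_nonneg hDd, habs2, abs_pow, abs_abs]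
      have hC1s2 : C1 * |s| ^ 3 ≤ C1 * |s| ^ 2 := mul_le_mul_of_nonneg_left habs3 hC1
      have eR : ((V + D ^ 2) / 2 + C1) * |s| ^ 2 = (V + D ^ 2) / 2 * |s| ^ 2 + C1 * |s| ^ 2 := by
        ring
      linarith [hA']
    have hadd : |u + D * s| ≤ 2 * E * |s| := by
      have := abs_add_le u (D * s)
      have h2 : |D * s| = |D| * |s| := abs_mul _ _
      have hDE : |D| ≤ E := by
        rw [hEdef]
        have := sq_nonneg D
        linarith
      have h4 : |D| * |s| ≤ E * |s| := mul_le_mul_of_nonneg_right hDE hs0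
      linarith [abs_add_le u (D * s), huE]
    have hquad : |(D ^ 2 * s ^ 2 - u ^ 2) / 2| ≤ E ^ 2 * |s| ^ 3 := by
      have e : (D ^ 2 * s ^ 2 - u ^ 2) / 2 = -((u - D * s) * (u + D * s)) / 2 := by ring
      rw [e, abs_div, abs_neg, abs_mul]
      have hb : |u - D * s| * |u + D * s| ≤ (((V + D ^ 2) / 2 + C1) * |s| ^ 2) * (2 * E * |s|) :=
        mul_le_mul hsub hadd (abs_nonneg _) (by positivity)
      have hVC : (V + D ^ 2) / 2 + C1 ≤ E := by
        rw [hEdef]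
        linarith [abs_nonneg D]
      have : (((V + D ^ 2) / 2 + C1) * |s| ^ 2) * (2 * E * |s|) ≤ (E * |s| ^ 2) * (2 * E * |s|) := by
        have h1 : ((V + D ^ 2) / 2 + C1) * |s| ^ 2 ≤ E * |s| ^ 2 :=
          mul_le_mul_of_nonneg_right hVC (by positivity)
        exact mul_le_mul_of_nonneg_right h1 (by positivity)
      have e2 : (E * |s| ^ 2) * (2 * E * |s|) = 2 * (E ^ 2 * |s| ^ 3) := by ring
      rw [abs_two]
      rw [e2] at this
      linarith [hb.trans this]
    -- combine
    have identity : Real.log (f s) - (D * s + V / 2 * s ^ 2)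
        = (Real.log (1 + u) - (u - u ^ 2 / 2))
          + (u - (D * s + (V + D ^ 2) / 2 * s ^ 2))
          + (D ^ 2 * s ^ 2 - u ^ 2) / 2 := by
      rw [hfs]; ring
    rw [identity]
    calc |Real.log (1 + u) - (u - u ^ 2 / 2) + (u - (D * s + (V + D ^ 2) / 2 * s ^ 2))
            + (D ^ 2 * s ^ 2 - u ^ 2) / 2|
        ≤ |Real.log (1 + u) - (u - u ^ 2 / 2)| + |u - (D * s + (V + D ^ 2) / 2 * s ^ 2)|
            + |(D ^ 2 * s ^ 2 - u ^ 2) / 2| := by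
          have := abs_add_le (Real.log (1 + u) - (u - u ^ 2 / 2) + (u - (D * s + (V + D ^ 2) / 2 * s ^ 2))) ((D ^ 2 * s ^ 2 - u ^ 2) / 2)
          have h2 := abs_add_le (Real.log (1 + u) - (u - u ^ 2 / 2)) (u - (D * s + (V + D ^ 2) / 2 * s ^ 2))
          linarith
      _ ≤ 2 * (E ^ 3 * |s| ^ 3) + C1 * |s| ^ 3 + E ^ 2 * |s| ^ 3 := by
          have := hlog.trans (by linarith [hu3] : 2 * |u| ^ 3 ≤ 2 * (E ^ 3 * |s| ^ 3))
          linarith [hA', hquad]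
      _ = K * |s| ^ 3 := by rw [hKdef]; ring
  -- conclude
  rw [Asymptotics.isBigO_iff]
  refine ⟨K, ?_⟩
  have h1 : ∀ᶠ s : ℝ in nhds 0, |s| ≤ δ := by
    filter_upwards [Metric.ball_mem_nhds (0:ℝ) hδ0] with s hs
    rw [Metric.mem_ball, Real.dist_eq, sub_zero] at hs
    exact hs.le
  filter_upwards [h1.filter_mono nhdsWithin_le_nhds, self_mem_nhdsWithin] with s hsδ hs0
  have hsne : s ≠ 0 := hs0
  have hEq : DRenyi (1 + s) P Q - (D + s / 2 * V)
      = s⁻¹ * (Real.log (f s) - (D * s + V / 2 * s ^ 2)) := by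
    have e1 : (1 + s - 1 : ℝ) = s := by ring
    simp only [DRenyi]
    rw [e1, gEq s]
    field_simp
  rw [hEq, Real.norm_eq_abs, Real.norm_eq_abs, abs_mul, abs_inv]
  have hks := key s hsδ
  have hspos : 0 < |s| := abs_pos.mpr hsne
  calc |s|⁻¹ * |Real.log (f s) - (D * s + V / 2 * s ^ 2)|
      ≤ |s|⁻¹ * (K * |s| ^ 3) := mul_le_mul_of_nonneg_left hks (by positivity)
    _ = K * |s| ^ 2 := by
        field_simp [hspos.ne']
    _ = K * |s ^ 2| := by rw [abs_pow]
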